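/- arXiv:2207.13160 — 2 statements merged into one kernel-verified Lean document; each statement's English description precedes it below -/
import Mathlib

section
/- Let p₁, q₁, p₂, q₂ be one-variable polynomials over ℂ such that every root of q₁ and of q₂ lies in the open unit disc {z : |z| < 1}, the degree of pᵢ is at most the degree of qᵢ for i = 1, 2, and suppose p₁(z)/q₁(z) + conj(p₂(z)/q₂(z)) = 0 for every z with |z| = 1. Then there exists a constant c ∈ ℂ such that p₁(z)/q₁(z) = c and p₂(z)/q₂(z) = -conj(c) for every z with |z| = 1. Consequently, the 'poles inside' decomposition of a rational function of z and z̄ on the unit circle is unique up to an additive constant. -/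
open ComplexConjugate

open Polynomial in
lemma circle_infinite : Set.Infinite {z : ℂ | ‖z‖ = 1} := by
  have hinj : Set.InjOn (fun t : ℝ => (⟨t, Real.sqrt (1 - t ^ 2)⟩ : ℂ)) (Set.Ioo (-1 : ℝ) 1) :=
    fun a _ b _ h => congrArg Complex.re h
  have hmaps : Set.MapsTo (fun t : ℝ => (⟨t, Real.sqrt (1 - t ^ 2)⟩ : ℂ))
      (Set.Ioo (-1 : ℝ) 1) {z : ℂ | ‖z‖ = 1} := by
    intro t ht
    have h1 : (0 : ℝ) ≤ 1 - t ^ 2 := by nlinarith [ht.1, ht.2]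
    have : Real.sqrt (1 - t ^ 2) * Real.sqrt (1 - t ^ 2) = 1 - t ^ 2 :=
      Real.mul_self_sqrt h1
    simp only [Set.mem_setOf_eq, Complex.norm_def, Complex.normSq_mk, this]
    rw [show t * t + (1 - t ^ 2) = 1 by ring, Real.sqrt_one]
  exact ((Set.Ioo_infinite (by norm_num)).image hinj).mono (Set.MapsTo.image_subset hmaps)

lemma eval_reflect_aux {f : Polynomial ℂ} {N : ℕ} (hf : f.natDegree ≤ N) {w : ℂ} (hw : w ≠ 0) :
    (Polynomial.reflect N f).eval w = w ^ N * f.eval w⁻¹ := by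
  have h0 : w⁻¹ ≠ 0 := inv_ne_zero hw
  letI := invertibleOfNonzero h0
  have h2 := Polynomial.eval₂_reflect_mul_pow (RingHom.id ℂ) w⁻¹ N f hf
  rw [invOf_eq_inv, inv_inv] at h2
  simp only [show ∀ (g : Polynomial ℂ) (x : ℂ), Polynomial.eval₂ (RingHom.id ℂ) x g = g.eval x from fun _ _ => rfl] at h2
  rw [← h2]
  rw [mul_left_comm, inv_pow, mul_inv_cancel₀ (pow_ne_zero N hw), mul_one]

/-- Uniqueness (up to an additive constant) of the "poles inside" decomposition:
if `p₁/q₁ + conj (p₂/q₂)` vanishes on the unit circle, where all roots of `q₁` and `q₂`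
lie in the open unit disc and `deg pᵢ ≤ deg qᵢ`, then `p₁/q₁` is a constant `c` and
`p₂/q₂` is the constant `-conj c` on the unit circle. -/
theorem poles_inside_decomposition_unique
    (p₁ q₁ p₂ q₂ : Polynomial ℂ)
    (h₁ : ∀ z : ℂ, q₁.eval z = 0 → ‖z‖ < 1)
    (h₂ : ∀ z : ℂ, q₂.eval z = 0 → ‖z‖ < 1)
    (hd₁ : p₁.degree ≤ q₁.degree) (hd₂ : p₂.degree ≤ q₂.degree)
    (hsum : ∀ z : ℂ, ‖z‖ = 1 →
      p₁.eval z / q₁.eval z + conj (p₂.eval z / q₂.eval z) = 0) :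
    ∃ c : ℂ, ∀ z : ℂ, ‖z‖ = 1 →
      p₁.eval z / q₁.eval z = c ∧ p₂.eval z / q₂.eval z = -conj c := by
  have hq₁ : q₁ ≠ 0 := by
    intro h
    have := h₁ 2 (by simp [h])
    rw [Complex.norm_two] at this; norm_num at this
  have hq₂ : q₂ ≠ 0 := by
    intro h
    have := h₂ 2 (by simp [h])
    rw [Complex.norm_two] at this; norm_num at this
  set N := q₂.natDegree with hN
  set pc := p₂.map (starRingEnd ℂ) with hpc
  set qc := q₂.map (starRingEnd ℂ) with hqc
  have hpcd : pc.natDegree ≤ N := by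
    rw [hpc, Polynomial.natDegree_map]
    exact Polynomial.natDegree_le_natDegree hd₂
  have hqcd : qc.natDegree ≤ N := by rw [hqc, Polynomial.natDegree_map]
  set P := Polynomial.reflect N pc with hP
  set Q := Polynomial.reflect N qc with hQ
  -- conj-eval facts
  have hconj_eval : ∀ (g : Polynomial ℂ) (u : ℂ),
      (g.map (starRingEnd ℂ)).eval (conj u) = conj (g.eval u) := by
    intro g u
    rw [Polynomial.eval_map, Polynomial.eval₂_at_apply]
  -- nonvanishing of q₁, q₂ on the circle
  have hq1z : ∀ z : ℂ, ‖z‖ = 1 → q₁.eval z ≠ 0 := by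
    intro z hz h
    have := h₁ z h; rw [hz] at this; exact lt_irrefl 1 this
  have hq2z : ∀ z : ℂ, ‖z‖ = 1 → q₂.eval z ≠ 0 := by
    intro z hz h
    have := h₂ z h; rw [hz] at this; exact lt_irrefl 1 this
  -- key polynomial identity
  have hR : p₁ * Q + P * q₁ = 0 := by
    apply Polynomial.eq_zero_of_infinite_isRoot
    apply circle_infinite.mono
    intro z hz
    have hz1 : ‖z‖ = 1 := hz
    have hz0 : z ≠ 0 := by
      intro h; rw [h] at hz1; simp at hz1
    have hzinv : conj z = z⁻¹ := by
      have hmul : z * conj z = 1 := by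
        rw [Complex.mul_conj]; norm_cast
        rw [Complex.normSq_eq_norm_sq, hz1, one_pow]
      field_simp
      linear_combination hmul
    have hq1 := hq1z z hz1
    have hqcz : qc.eval z⁻¹ ≠ 0 := by
      rw [← hzinv, hqc, hconj_eval]
      simpa using hq2z z hz1
    have hQz : Q.eval z = z ^ N * qc.eval z⁻¹ := eval_reflect_aux hqcd hz0
    have hPz : P.eval z = z ^ N * pc.eval z⁻¹ := eval_reflect_aux hpcd hz0
    have hQne : Q.eval z ≠ 0 := by
      rw [hQz]; exact mul_ne_zero (pow_ne_zero _ hz0) hqcz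
    have hval : conj (p₂.eval z / q₂.eval z) = P.eval z / Q.eval z := by
      rw [map_div₀, ← hconj_eval p₂ z, ← hconj_eval q₂ z, hzinv, ← hpc, ← hqc,
        hPz, hQz, mul_div_mul_left _ _ (pow_ne_zero _ hz0)]
    have hs := hsum z hz1
    rw [hval, div_add_div _ _ hq1 hQne, _root_.div_eq_zero_iff] at hs
    rcases hs with hs | hs
    · show (p₁ * Q + P * q₁).eval z = 0
      simp only [Polynomial.eval_add, Polynomial.eval_mul]
      linear_combination hs
    · exact absurd hs (mul_ne_zero hq1 hQne)
  -- coprimality of q₁ and Q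
  have hcop : IsCoprime q₁ Q := by
    rw [Polynomial.isCoprime_iff_aeval_ne_zero_of_isAlgClosed (k := ℂ) ℂ q₁ Q]
    intro a
    by_cases ha : q₁.eval a = 0
    · right
      have halt : ‖a‖ < 1 := h₁ a ha
      have ha0 : Polynomial.aeval a Q = Q.eval a := rfl
      rw [ha0]
      rcases eq_or_ne a 0 with rfl | hane
      · rw [← Polynomial.coeff_zero_eq_eval_zero, hQ, Polynomial.coeff_reflect,
          Polynomial.revAt_le (Nat.zero_le N), Nat.sub_zero, hqc, Polynomial.coeff_map]
        intro h
        have h' : q₂.coeff N = 0 := by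
          have := congrArg (starRingEnd ℂ) h
          simpa using this
        exact Polynomial.leadingCoeff_ne_zero.mpr hq₂ h'
      · rw [eval_reflect_aux hqcd hane]
        refine mul_ne_zero (pow_ne_zero _ hane) ?_
        have : qc.eval a⁻¹ = conj (q₂.eval (conj a⁻¹)) := by
          rw [hqc, ← hconj_eval q₂, Complex.conj_conj]
        rw [this]
        intro h
        have h0 : q₂.eval (conj a⁻¹) = 0 := by
          have := congrArg (starRingEnd ℂ) h
          simpa using this
        have hlt := h₂ _ h0
        rw [Complex.norm_conj, norm_inv] at hlt
        have hpos : 0 < ‖a‖ := norm_pos_iff.mpr hane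
        have h1 : ‖a‖ * ‖a‖⁻¹ = 1 := mul_inv_cancel₀ (ne_of_gt hpos)
        nlinarith
    · left
      show Polynomial.aeval a q₁ ≠ 0
      have ha0 : Polynomial.aeval a q₁ = q₁.eval a := rfl
      rw [ha0]; exact ha
  -- q₁ divides p₁
  have hdvd : q₁ ∣ p₁ := by
    apply hcop.dvd_of_dvd_mul_right
    exact ⟨-P, by linear_combination hR⟩
  obtain ⟨s, hs⟩ := hdvd
  have hsdeg : s.degree ≤ 0 := by
    have hb : q₁.degree ≠ ⊥ := by
      rw [ne_eq, Polynomial.degree_eq_bot]; exact hq₁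
    have h : q₁.degree + s.degree ≤ q₁.degree + 0 := by
      rw [add_zero, ← Polynomial.degree_mul, ← hs]; exact hd₁
    exact (WithBot.add_le_add_iff_left hb).mp h
  set c := s.coeff 0 with hc
  have hsC : s = Polynomial.C c := Polynomial.eq_C_of_degree_le_zero hsdeg
  refine ⟨c, fun z hz => ?_⟩
  have hq1 := hq1z z hz
  have hpart1 : p₁.eval z / q₁.eval z = c := by
    rw [hs, hsC, Polynomial.eval_mul, Polynomial.eval_C, mul_comm,
      mul_div_assoc, div_self hq1, mul_one]
  refine ⟨hpart1, ?_⟩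
  have hsz := hsum z hz
  rw [hpart1] at hsz
  have h3 : conj (p₂.eval z / q₂.eval z) = -c := by linear_combination hsz
  have := congrArg (conj : ℂ → ℂ) h3
  rwa [Complex.conj_conj, map_neg] at this
end

section
/- Let P and Q be polynomials in two variables over ℂ with Q(z, conj z) ≠ 0 for every z with |z| = 1. Then there exist a unique constant c ∈ ℂ and unique functions k₁ and k₂, each a finite complex linear combination of the functions z ↦ z^(m+1)/(1 - z·conj(a))^(m+1) with a ranging over the open unit disc and m over nonnegative integers, such that P(z, conj z)/Q(z, conj z) = c + k₁(z) + conj(k₂(z)) for every z with |z| = 1. (These spanning functions are, up to nonzero constant factors, the antiderivatives k_a^m of the Bergman span elements of the unit disc normalized to vanish at 0; this is the partial-fractions-like decomposition ℛ_s = ℂ + 𝐤 + conj(𝐤) for the unit disc.) -/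
open ComplexConjugate

/-- The generators of the span `𝐤` of the antiderivatives `k_a^m` of the Bergman span
elements of the unit disc normalized to vanish at `0`: up to nonzero constant factors
these are the functions `z ↦ z^(m+1)/(1 - z·conj a)^(m+1)` for `a` in the open unit
disc and `m` a nonnegative integer. -/
def kGens : Set (ℂ → ℂ) :=
  {f | ∃ (a : ℂ) (m : ℕ), ‖a‖ < 1 ∧
    f = fun z => z ^ (m + 1) / (1 - z * conj a) ^ (m + 1)}

open Polynomial Filter Topology

noncomputable section

def gen (a : ℂ) (m : ℕ) : ℂ → ℂ := fun z => z ^ (m + 1) / (1 - z * conj a) ^ (m + 1)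

lemma gen_mem_span {a : ℂ} (ha : ‖a‖ < 1) (m : ℕ) :
    gen a m ∈ Submodule.span ℂ kGens :=
  Submodule.subset_span ⟨a, m, ha, rfl⟩

lemma circle_conj {z : ℂ} (hz : ‖z‖ = 1) : conj z = z⁻¹ := by
  have hz0 : z ≠ 0 := by
    intro h; rw [h] at hz; simp at hz
  field_simp
  rw [mul_comm, Complex.mul_conj]
  norm_cast
  rw [Complex.normSq_eq_norm_sq, hz]; norm_num

lemma circle_ne_zero {z : ℂ} (hz : ‖z‖ = 1) : z ≠ 0 := by
  intro h; rw [h] at hz; simp at hz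

def Good (f : ℂ → ℂ) : Prop :=
  ∃ c k₁ k₂, k₁ ∈ Submodule.span ℂ kGens ∧ k₂ ∈ Submodule.span ℂ kGens ∧
    ∀ z : ℂ, ‖z‖ = 1 → f z = c + k₁ z + conj (k₂ z)

lemma good_congr {f g : ℂ → ℂ} (h : ∀ z, ‖z‖ = 1 → f z = g z) (hg : Good g) :
    Good f := by
  obtain ⟨c, k₁, k₂, h1, h2, h3⟩ := hg
  exact ⟨c, k₁, k₂, h1, h2, fun z hz => (h z hz).trans (h3 z hz)⟩

lemma good_add {f g : ℂ → ℂ} (hf : Good f) (hg : Good g) : Good (fun z => f z + g z) := by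
  obtain ⟨c, k₁, k₂, h1, h2, h3⟩ := hf
  obtain ⟨c', k₁', k₂', h1', h2', h3'⟩ := hg
  refine ⟨c + c', k₁ + k₁', k₂ + k₂', Submodule.add_mem _ h1 h1',
    Submodule.add_mem _ h2 h2', fun z hz => ?_⟩
  simp only [Pi.add_apply, h3 z hz, h3' z hz, map_add]
  ring

lemma good_smul {f : ℂ → ℂ} (s : ℂ) (hf : Good f) : Good (fun z => s * f z) := by
  obtain ⟨c, k₁, k₂, h1, h2, h3⟩ := hf
  refine ⟨s * c, s • k₁, conj s • k₂, Submodule.smul_mem _ _ h1,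
    Submodule.smul_mem _ _ h2, fun z hz => ?_⟩
  simp only [Pi.smul_apply, smul_eq_mul, h3 z hz, map_mul, Complex.conj_conj]
  ring

lemma good_const (c : ℂ) : Good (fun _ => c) :=
  ⟨c, 0, 0, Submodule.zero_mem _, Submodule.zero_mem _, fun z _ => by simp⟩

lemma good_monomial (n : ℕ) : Good (fun z => z ^ n) := by
  cases n with
  | zero => exact good_congr (fun z _ => by simp) (good_const 1)
  | succ n =>
    refine ⟨0, gen 0 n, 0, gen_mem_span (by simp) n, Submodule.zero_mem _, fun z hz => ?_⟩
    simp [gen]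

lemma good_poly (p : Polynomial ℂ) : Good (fun z => p.eval z) := by
  induction p using Polynomial.induction_on' with
  | add p q hp hq => exact good_congr (fun z _ => by simp) (good_add hp hq)
  | monomial n c =>
    exact good_congr (fun z _ => by simp [Polynomial.eval_monomial])
      (good_smul c (good_monomial n))

lemma conj_gen_circle {b z : ℂ} (hb : ‖b‖ < 1) (hz : ‖z‖ = 1) (n : ℕ) :
    conj (gen b n z) = ((z - b) ^ (n + 1))⁻¹ := by
  have hz0 : z ≠ 0 := circle_ne_zero hz
  have hcz : conj z ≠ 0 := by simpa using hz0
  have hzc : z * conj z = 1 := by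
    rw [Complex.mul_conj]; norm_cast; rw [Complex.normSq_eq_norm_sq, hz]; norm_num
  have hzb : z - b ≠ 0 := by
    intro h
    rw [sub_eq_zero] at h
    rw [← h] at hb; rw [hz] at hb; norm_num at hb
  have key : 1 - conj z * b = conj z * (z - b) := by
    rw [mul_sub, mul_comm (conj z) z, hzc]
  simp only [gen, map_div₀, map_pow, map_sub, map_one, map_mul, Complex.conj_conj]
  rw [key, mul_pow]
  rw [div_mul_eq_div_div, div_self (pow_ne_zero _ hcz), one_div]
lemma gen_mul_gen (a : ℂ) (j k : ℕ) : gen a j * gen a k = gen a (j + k + 1) := by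
  funext z
  simp only [gen, Pi.mul_apply]
  rw [div_mul_div_comm, ← pow_add, ← pow_add, show (j + 1) + (k + 1) = j + k + 1 + 1 by ring]

def genSpan (a : ℂ) : Submodule ℂ (ℂ → ℂ) := Submodule.span ℂ {g | ∃ m, g = gen a m}

lemma genSpan_mul_mem {a : ℂ} {k₁ k₂ : ℂ → ℂ} (h1 : k₁ ∈ genSpan a) (h2 : k₂ ∈ genSpan a) :
    k₁ * k₂ ∈ genSpan a := by
  have h := Submodule.mul_mem_mul h1 h2
  rw [genSpan, Submodule.span_mul_span] at h
  refine Submodule.span_le.mpr ?_ h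
  rintro x hx
  rw [Set.mem_mul] at hx
  obtain ⟨u, ⟨mu, rfl⟩, v, ⟨mv, rfl⟩, rfl⟩ := hx
  exact Submodule.subset_span ⟨mu + mv + 1, gen_mul_gen a mu mv⟩

lemma genSpan_le_span {a : ℂ} (ha : ‖a‖ < 1) :
    genSpan a ≤ Submodule.span ℂ kGens := by
  refine Submodule.span_le.mpr ?_
  rintro x ⟨m, rfl⟩
  exact Submodule.subset_span ⟨a, m, ha, rfl⟩

def OForm (a : ℂ) (f : ℂ → ℂ) : Prop :=
  ∃ c : ℂ, ∃ k ∈ genSpan a, ∀ z, ‖z‖ = 1 → f z = c + k z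

lemma oform_congr {a : ℂ} {f g : ℂ → ℂ} (h : ∀ z, ‖z‖ = 1 → f z = g z)
    (hg : OForm a g) : OForm a f := by
  obtain ⟨c, k, hk, hid⟩ := hg
  exact ⟨c, k, hk, fun z hz => (h z hz).trans (hid z hz)⟩

lemma oform_mul {a : ℂ} {f g : ℂ → ℂ} (hf : OForm a f) (hg : OForm a g) :
    OForm a (fun z => f z * g z) := by
  obtain ⟨c, k, hk, hid⟩ := hf
  obtain ⟨c', k', hk', hid'⟩ := hg
  refine ⟨c * c', c • k' + c' • k + k * k',
    Submodule.add_mem _ (Submodule.add_mem _ (Submodule.smul_mem _ _ hk')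
      (Submodule.smul_mem _ _ hk)) (genSpan_mul_mem hk hk'), fun z hz => ?_⟩
  simp only [Pi.add_apply, Pi.smul_apply, Pi.mul_apply, smul_eq_mul, hid z hz, hid' z hz]
  ring

lemma inv_linear_outside {r : ℂ} (hr : 1 < ‖r‖) :
    OForm ((conj r)⁻¹) (fun z => (z - r)⁻¹) := by
  have hr0 : r ≠ 0 := by
    intro h; rw [h] at hr; simp at hr; exact absurd hr (by norm_num)
  refine ⟨-r⁻¹, (-r⁻¹ * r⁻¹) • gen ((conj r)⁻¹) 0,
    Submodule.smul_mem _ _ (Submodule.subset_span ⟨0, rfl⟩), fun z hz => ?_⟩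
  have hzr : z - r ≠ 0 := by
    intro h; rw [sub_eq_zero] at h; rw [h] at hz; rw [hz] at hr; norm_num at hr
  have hd : 1 - z * r⁻¹ ≠ 0 := by
    intro h
    apply hzr
    have : z * r⁻¹ = 1 := by linear_combination -h
    field_simp at this
    rw [this, sub_self]
  have hca : conj ((conj r)⁻¹) = r⁻¹ := by
    rw [map_inv₀, Complex.conj_conj]
  simp only [Pi.smul_apply, smul_eq_mul, gen, hca, zero_add, pow_one]
  have hrz : r - z ≠ 0 := fun h => hzr (by rw [← neg_sub, h, neg_zero])
  have hkey : 1 - z * r⁻¹ = (r - z) / r := by field_simp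
  rw [hkey, div_div_eq_mul_div]
  field_simp
  ring

lemma oform_inv_pow {r : ℂ} (hr : 1 < ‖r‖) (n : ℕ) :
    OForm ((conj r)⁻¹) (fun z => ((z - r) ^ (n + 1))⁻¹) := by
  induction n with
  | zero => exact oform_congr (fun z hz => by rw [pow_one]) (inv_linear_outside hr)
  | succ n ih =>
    refine oform_congr (g := fun z => ((z - r) ^ (n + 1))⁻¹ * (z - r)⁻¹)
      (fun z hz => by rw [pow_succ, mul_inv]) (oform_mul ih (inv_linear_outside hr))

lemma good_inv_pow {r : ℂ} (hr : ‖r‖ ≠ 1) (n : ℕ) :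
    Good (fun z => ((z - r) ^ (n + 1))⁻¹) := by
  rcases lt_or_gt_of_ne hr with h | h
  · exact ⟨0, 0, gen r n, Submodule.zero_mem _, gen_mem_span h n,
      fun z hz => by rw [conj_gen_circle h hz]; simp⟩
  · obtain ⟨c, k, hk, hid⟩ := oform_inv_pow h n
    have ha : ‖(conj r)⁻¹‖ < 1 := by
      rw [norm_inv, Complex.norm_conj]
      rw [inv_lt_one_iff₀]
      right; exact h
    exact ⟨c, k, 0, genSpan_le_span ha hk, Submodule.zero_mem _,
      fun z hz => by rw [hid z hz]; simp⟩
lemma good_div_const (d : ℂ) (A : Polynomial ℂ) : Good (fun z => A.eval z / d) :=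
  good_congr (fun z _ => by rw [div_eq_inv_mul]) (good_smul d⁻¹ (good_poly A))

lemma good_ratfun : ∀ (N : ℕ) (D : Polynomial ℂ), D.natDegree ≤ N →
    (∀ z, ‖z‖ = 1 → D.eval z ≠ 0) →
    ∀ A : Polynomial ℂ, Good (fun z => A.eval z / D.eval z) := by
  intro N
  induction N with
  | zero =>
    intro D hD hcirc A
    rw [Polynomial.eq_C_of_natDegree_eq_zero (Nat.le_zero.mp hD)]
    exact good_congr (fun z _ => by rw [Polynomial.eval_C]) (good_div_const _ A)
  | succ N ih =>
    intro D hD hcirc A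
    by_cases h0 : D.natDegree = 0
    · rw [Polynomial.eq_C_of_natDegree_eq_zero h0]
      exact good_congr (fun z _ => by rw [Polynomial.eval_C]) (good_div_const _ A)
    · have hD0 : D ≠ 0 := fun h => hcirc 1 (by simp) (by simp [h])
      have hdegpos : 0 < D.degree := Polynomial.natDegree_pos_iff_degree_pos.mp
        (Nat.pos_of_ne_zero h0)
      obtain ⟨r, hroot⟩ := Complex.exists_root hdegpos
      have hr : ‖r‖ ≠ 1 := fun h => hcirc r h hroot
      have hkpos : 0 < Polynomial.rootMultiplicity r D :=
        (Polynomial.rootMultiplicity_pos hD0).mpr hroot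
      obtain ⟨D₂, hD₂, hndvd⟩ := D.exists_eq_pow_rootMultiplicity_mul_and_not_dvd hD0 r
      obtain ⟨k', hk'⟩ : ∃ k', Polynomial.rootMultiplicity r D = k' + 1 :=
        ⟨Polynomial.rootMultiplicity r D - 1, (Nat.succ_pred_eq_of_pos hkpos).symm⟩
      rw [hk'] at hD₂
      have hD₂r : D₂.eval r ≠ 0 := fun h => hndvd (Polynomial.dvd_iff_isRoot.mpr h)
      have hD₂0 : D₂ ≠ 0 := fun h => hD₂r (by rw [h]; simp)
      set c := A.eval r / D₂.eval r with hc
      have hdvd : (Polynomial.X - Polynomial.C r) ∣ (A - Polynomial.C c * D₂) := by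
        refine Polynomial.dvd_iff_isRoot.mpr ?_
        simp only [Polynomial.IsRoot, Polynomial.eval_sub, Polynomial.eval_mul,
          Polynomial.eval_C, hc]
        field_simp
        ring
      obtain ⟨A₂, hA₂⟩ := hdvd
      set D' := (Polynomial.X - Polynomial.C r) ^ k' * D₂ with hD'
      have hXr : (Polynomial.X - Polynomial.C r : Polynomial ℂ) ≠ 0 :=
        Polynomial.X_sub_C_ne_zero r
      have hdegD : D.natDegree = (k' + 1) + D₂.natDegree := by
        rw [hD₂, Polynomial.natDegree_mul (pow_ne_zero _ hXr) hD₂0,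
          Polynomial.natDegree_pow, Polynomial.natDegree_X_sub_C, mul_one]
      have hdegD' : D'.natDegree ≤ N := by
        rw [hD', Polynomial.natDegree_mul (pow_ne_zero _ hXr) hD₂0,
          Polynomial.natDegree_pow, Polynomial.natDegree_X_sub_C, mul_one]
        omega
      have hcirc' : ∀ z, ‖z‖ = 1 → D'.eval z ≠ 0 := by
        intro z hz
        have hzr : z - r ≠ 0 := fun h => hr ((sub_eq_zero.mp h) ▸ hz)
        have hd2 : D₂.eval z ≠ 0 := by
          intro h
          exact hcirc z hz (by rw [hD₂]; simp [h])
        rw [hD']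
        simp only [Polynomial.eval_mul, Polynomial.eval_pow, Polynomial.eval_sub,
          Polynomial.eval_X, Polynomial.eval_C]
        exact mul_ne_zero (pow_ne_zero _ hzr) hd2
      refine good_congr (g := fun z => c * ((z - r) ^ (k' + 1))⁻¹ + A₂.eval z / D'.eval z)
        (fun z hz => ?_) (good_add (good_smul c (good_inv_pow hr k')) (ih D' hdegD' hcirc' A₂))
      have hu : z - r ≠ 0 := by
        intro h; rw [sub_eq_zero] at h; exact hr (h ▸ hz)
      have hd2 : D₂.eval z ≠ 0 := by
        intro h
        exact hcirc z hz (by rw [hD₂]; simp [Polynomial.eval_mul, h])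
      have e1 : A.eval z = c * D₂.eval z + (z - r) * A₂.eval z := by
        have h2 := congrArg (Polynomial.eval z) hA₂
        simp only [Polynomial.eval_sub, Polynomial.eval_mul, Polynomial.eval_C,
          Polynomial.eval_X] at h2
        linear_combination h2
      have eD : D.eval z = (z - r) ^ (k' + 1) * D₂.eval z := by
        rw [hD₂]; simp [Polynomial.eval_mul, Polynomial.eval_pow]
      rw [e1, eD]
      simp only [hD', Polynomial.eval_mul, Polynomial.eval_pow, Polynomial.eval_sub,
        Polynomial.eval_X, Polynomial.eval_C]
      field_simp
      ring
def polOf (P : MvPolynomial (Fin 2) ℂ) (N : ℕ) : Polynomial ℂ :=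
  ∑ d ∈ P.support, Polynomial.C (MvPolynomial.coeff d P) * Polynomial.X ^ (d 0 + (N - d 1))

lemma eval_polOf (P : MvPolynomial (Fin 2) ℂ) (N : ℕ) (hN : ∀ d ∈ P.support, d 1 ≤ N)
    {z : ℂ} (hz : ‖z‖ = 1) :
    (polOf P N).eval z = MvPolynomial.eval ![z, conj z] P * z ^ N := by
  have hz0 := circle_ne_zero hz
  rw [polOf, Polynomial.eval_finset_sum, MvPolynomial.eval_eq', Finset.sum_mul]
  refine Finset.sum_congr rfl fun d hd => ?_
  simp only [Polynomial.eval_mul, Polynomial.eval_C, Polynomial.eval_pow, Polynomial.eval_X]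
  rw [Fin.prod_univ_two]
  simp only [Matrix.cons_val_zero, Matrix.cons_val_one, Matrix.head_cons]
  rw [circle_conj hz]
  have hsplit : z ^ N = z ^ (d 1) * z ^ (N - d 1) := by
    rw [← pow_add, Nat.add_sub_cancel' (hN d hd)]
  rw [hsplit, pow_add]
  field_simp
  ring
  rw [mul_assoc, ← mul_pow, mul_inv_cancel₀ hz0, one_pow, mul_one]

lemma good_PQ (P Q : MvPolynomial (Fin 2) ℂ)
    (hQ : ∀ z : ℂ, ‖z‖ = 1 → MvPolynomial.eval ![z, conj z] Q ≠ 0) :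
    Good (fun z => MvPolynomial.eval ![z, conj z] P / MvPolynomial.eval ![z, conj z] Q) := by
  set N := P.support.sup (fun d => d 1) with hNdef
  set M := Q.support.sup (fun d => d 1) with hMdef
  have hNB : ∀ d ∈ P.support, d 1 ≤ N := fun d hd => Finset.le_sup (f := fun d => d 1) hd
  have hMB : ∀ d ∈ Q.support, d 1 ≤ M := fun d hd => Finset.le_sup (f := fun d => d 1) hd
  obtain ⟨DD, hDD⟩ : ∃ DD, DD = Polynomial.X ^ N * polOf Q M := ⟨_, rfl⟩
  obtain ⟨AA, hAA⟩ : ∃ AA, AA = Polynomial.X ^ M * polOf P N := ⟨_, rfl⟩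
  have hDDev : ∀ z, ‖z‖ = 1 →
      DD.eval z = z ^ N * (MvPolynomial.eval ![z, conj z] Q * z ^ M) := by
    intro z hz
    rw [hDD, Polynomial.eval_mul, Polynomial.eval_pow, Polynomial.eval_X,
      eval_polOf Q M hMB hz]
  have hDcirc : ∀ z, ‖z‖ = 1 → DD.eval z ≠ 0 := by
    intro z hz
    rw [hDDev z hz]
    have hz0 := circle_ne_zero hz
    exact mul_ne_zero (pow_ne_zero _ hz0) (mul_ne_zero (hQ z hz) (pow_ne_zero _ hz0))
  refine good_congr (g := fun z => AA.eval z / DD.eval z) (fun z hz => ?_)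
    (good_ratfun DD.natDegree DD le_rfl hDcirc AA)
  have hz0 := circle_ne_zero hz
  change _ = AA.eval z / DD.eval z
  rw [hDDev z hz, hAA, Polynomial.eval_mul, Polynomial.eval_pow, Polynomial.eval_X,
    eval_polOf P N hNB hz]
  rw [div_eq_div_iff (hQ z hz)
    (mul_ne_zero (pow_ne_zero _ hz0) (mul_ne_zero (hQ z hz) (pow_ne_zero _ hz0)))]
  ring
lemma compl_mem_punctured {E : Set ℂ} (hE : E.Finite) (z₀ : ℂ) : Eᶜ ∈ 𝓝[≠] z₀ := by
  refine mem_nhdsWithin.mpr ⟨(E \ {z₀})ᶜ, ((hE.subset Set.diff_subset).isClosed).isOpen_compl,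
    fun h => h.2 rfl, fun x hx => ?_⟩
  exact fun hxE => hx.1 ⟨hxE, hx.2⟩

lemma limit_zero_helper {E : Set ℂ} (hE : E.Finite) {H : ℂ → ℂ} {z₀ L : ℂ}
    (h0 : ∀ z ∉ E, H z = 0) (hT : Tendsto H (𝓝[≠] z₀) (𝓝 L)) : L = 0 := by
  refine tendsto_nhds_unique hT ?_
  refine Tendsto.congr' ?_ tendsto_const_nhds
  filter_upwards [compl_mem_punctured hE z₀] with z hz
  exact (h0 z hz).symm

lemma indep_base (s : Finset (ℂ → ℂ)) (a : (ℂ → ℂ) → ℂ) (m : (ℂ → ℂ) → ℕ)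
    (c : (ℂ → ℂ) → ℂ) (γ : ℂ) (E : Set ℂ) (hE : E.Finite)
    (hinj : Set.InjOn (fun f => (a f, m f)) s)
    (ha0 : ∀ f ∈ s, a f = 0)
    (hid : ∀ z ∉ E, γ + ∑ f ∈ s, c f * gen (a f) (m f) z = 0) :
    γ = 0 ∧ ∀ f ∈ s, c f = 0 := by
  classical
  set p : Polynomial ℂ := Polynomial.C γ +
    ∑ f ∈ s, Polynomial.C (c f) * Polynomial.X ^ (m f + 1) with hp
  have hpz : ∀ z ∉ E, p.eval z = 0 := by
    intro z hz
    rw [hp]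
    simp only [Polynomial.eval_add, Polynomial.eval_C, Polynomial.eval_finset_sum,
      Polynomial.eval_mul, Polynomial.eval_pow, Polynomial.eval_X]
    rw [← hid z hz]
    congr 1
    refine Finset.sum_congr rfl fun f hf => ?_
    rw [ha0 f hf]
    simp [gen]
  have hp0 : p = 0 := by
    refine Polynomial.eq_zero_of_infinite_isRoot p ?_
    refine Set.Infinite.mono (fun z hz => hpz z hz) ?_
    exact hE.infinite_compl
  have hminj : Set.InjOn m s := by
    intro f hf g hg h
    apply hinj hf hg
    simp only [ha0 f hf, ha0 g hg, h]
  constructor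
  · have := congrArg (fun q => Polynomial.coeff q 0) hp0
    simp only [hp, Polynomial.coeff_add, Polynomial.coeff_C_mul, Polynomial.coeff_zero,
      Polynomial.finset_sum_coeff, Polynomial.coeff_X_pow, Polynomial.coeff_C] at this
    simpa using this
  · intro f₀ hf₀
    have := congrArg (fun q => Polynomial.coeff q (m f₀ + 1)) hp0
    simp only [hp, Polynomial.coeff_add, Polynomial.coeff_C_mul, Polynomial.coeff_zero,
      Polynomial.finset_sum_coeff, Polynomial.coeff_X_pow, Polynomial.coeff_C] at this
    rw [Finset.sum_eq_single f₀] at this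
    · simpa using this
    · intro f hf hne
      have hmm : m f₀ + 1 ≠ m f + 1 := by
        intro h
        exact hne (hminj hf hf₀ (Nat.succ_injective h.symm))
      simp [hmm]
      exact fun h => (hmm (by rw [h])).elim
    · intro h; exact absurd hf₀ h
lemma one_sub_ne_zero_of_abs_lt {w : ℂ} (h : ‖w‖ < 1) : 1 - w ≠ 0 := by
  intro h'
  rw [sub_eq_zero] at h'
  rw [← h'] at h
  simp at h

lemma tendsto_mul_vanish {M T : ℂ → ℂ} {z₀ : ℂ} (hM : ContinuousAt M z₀) (hM0 : M z₀ = 0)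
    (hT : ContinuousAt T z₀) : Tendsto (fun z => M z * T z) (𝓝[≠] z₀) (𝓝 0) := by
  have h := (hM.mul hT).tendsto
  rw [Pi.mul_apply] at h
  rw [hM0, zero_mul] at h
  exact h.mono_left nhdsWithin_le_nhds

lemma continuousAt_gen {a : ℂ} (m : ℕ) {z₀ : ℂ} (h : 1 - z₀ * conj a ≠ 0) :
    ContinuousAt (gen a m) z₀ := by
  refine ContinuousAt.div ((continuousAt_id.pow _)) ?_ (pow_ne_zero _ h)
  exact (continuousAt_const.sub (continuousAt_id.mul continuousAt_const)).pow _

lemma continuousAt_M {α : ℂ} (m : ℕ) (z₀ : ℂ) :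
    ContinuousAt (fun z => (1 - z * conj α) ^ (m + 1)) z₀ :=
  (continuousAt_const.sub (continuousAt_id.mul continuousAt_const)).pow _

lemma continuousAt_invpow {b : ℂ} (n : ℕ) {z₀ : ℂ} (h : z₀ - b ≠ 0) :
    ContinuousAt (fun z => ((z - b) ^ (n + 1))⁻¹) z₀ :=
  ((continuousAt_id.sub continuousAt_const).pow _).inv₀ (pow_ne_zero _ h)
lemma indep : ∀ (N : ℕ) (s t : Finset (ℂ → ℂ)) (a b : (ℂ → ℂ) → ℂ) (m n : (ℂ → ℂ) → ℕ)
    (c c' : (ℂ → ℂ) → ℂ) (γ : ℂ) (E : Set ℂ), s.card + t.card ≤ N → E.Finite →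
    (∀ f ∈ s, ‖a f‖ < 1) → (∀ f ∈ t, ‖b f‖ < 1) →
    Set.InjOn (fun f => (a f, m f)) s → Set.InjOn (fun f => (b f, n f)) t →
    (∀ z ∉ E, γ + (∑ f ∈ s, c f * gen (a f) (m f) z)
      + (∑ f ∈ t, c' f * ((z - b f) ^ (n f + 1))⁻¹) = 0) →
    γ = 0 ∧ (∀ f ∈ s, c f = 0) ∧ (∀ f ∈ t, c' f = 0) := by
  classical
  intro N
  induction N with
  | zero =>
    intro s t a b m n c c' γ E hcard hE ha hb hinja hinjb hid
    have hs : s = ∅ := Finset.card_eq_zero.mp (by omega)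
    have ht : t = ∅ := Finset.card_eq_zero.mp (by omega)
    subst hs; subst ht
    obtain ⟨z, hz⟩ := hE.infinite_compl.nonempty
    have := hid z hz
    simp only [Finset.sum_empty, add_zero] at this
    exact ⟨this, by simp, by simp⟩
  | succ N ih =>
    intro s t a b m n c c' γ E hcard hE ha hb hinja hinjb hid
    rcases Finset.eq_empty_or_nonempty t with ht | ⟨f₀, hf₀⟩
    · -- t is empty
      subst ht
      simp only [Finset.sum_empty, add_zero] at hid
      by_cases hall0 : ∀ f ∈ s, a f = 0
      · obtain ⟨hγ, hc⟩ := indep_base s a m c γ E hE hinja hall0 hid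
        exact ⟨hγ, hc, by simp⟩
      · push_neg at hall0
        obtain ⟨f₀, hf₀, hα0⟩ := hall0
        set α := a f₀ with hα
        set s' := s.filter (fun f => a f = α) with hs'
        have hf₀' : f₀ ∈ s' := Finset.mem_filter.mpr ⟨hf₀, rfl⟩
        have hne' : (s'.image m).Nonempty := ⟨m f₀, Finset.mem_image_of_mem m hf₀'⟩
        set m₀ := (s'.image m).max' hne' with hm₀
        obtain ⟨fs, hfs', hfsm⟩ := Finset.mem_image.mp ((s'.image m).max'_mem hne')
        have hfs : fs ∈ s := (Finset.mem_filter.mp hfs').1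
        have hfsa : a fs = α := (Finset.mem_filter.mp hfs').2
        have hca : conj α ≠ 0 := by simpa using hα0
        set z₀ := (conj α)⁻¹ with hz₀
        have hz₀0 : z₀ ≠ 0 := inv_ne_zero hca
        have hz₀α : z₀ * conj α = 1 := inv_mul_cancel₀ hca
        have hMz₀ : ∀ j : ℕ, (1 - z₀ * conj α) ^ (j + 1) = 0 := by
          intro j
          rw [hz₀α, sub_self, zero_pow (Nat.succ_ne_zero j)]
        have hdne : ∀ z : ℂ, z ≠ z₀ → 1 - z * conj α ≠ 0 := by
          intro z hz h
          apply hz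
          have : z * conj α = 1 := by linear_combination -h
          rw [hz₀]
          field_simp [hca] at this ⊢
          rw [this]
        -- limit of each term of H
        have hterm : ∀ f ∈ s, Tendsto
            (fun z => (1 - z * conj α) ^ (m₀ + 1) * (c f * gen (a f) (m f) z)) (𝓝[≠] z₀)
            (𝓝 (if f = fs then c fs * z₀ ^ (m₀ + 1) else 0)) := by
          intro f hf
          rcases eq_or_ne f fs with rfl | hffs
          · simp only [if_pos rfl]
            refine Tendsto.congr' ?_ ((continuousAt_const.mul
              (continuousAt_id.pow (m₀ + 1))).tendsto.mono_left nhdsWithin_le_nhds)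
            filter_upwards [self_mem_nhdsWithin] with z hz
            have hd := hdne z hz
            simp only [gen, hfsa, hfsm, ← hm₀, Pi.mul_apply, Pi.pow_apply, id]
            field_simp
          · simp only [if_neg hffs]
            rcases eq_or_ne (a f) α with hfα | hfα
            · -- same α, smaller m
              have hmle : m f ≤ m₀ := Finset.le_max' _ _
                (Finset.mem_image_of_mem m (Finset.mem_filter.mpr ⟨hf, hfα⟩))
              have hmne : m f ≠ m₀ := by
                intro h
                exact hffs (hinja hf hfs (by simp [hfα, hfsa, h, hfsm, hm₀]))
              have hmlt : m f < m₀ := lt_of_le_of_ne hmle hmne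
              refine Tendsto.congr' (f₁ := fun z =>
                c f * z ^ (m f + 1) * (1 - z * conj α) ^ (m₀ - m f)) ?_ ?_
              · filter_upwards [self_mem_nhdsWithin] with z hz
                have hd := hdne z hz
                simp only [gen, hfα]
                rw [show m₀ + 1 = (m f + 1) + (m₀ - m f) by omega, pow_add]
                field_simp
                ring
              · have hcont : ContinuousAt (fun z : ℂ =>
                    c f * z ^ (m f + 1) * (1 - z * conj α) ^ (m₀ - m f)) z₀ :=
                  ((continuousAt_const.mul (continuousAt_id.pow _)).mul
                    ((continuousAt_const.sub (continuousAt_id.mul continuousAt_const)).pow _))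
                have h0 : c f * z₀ ^ (m f + 1) * (1 - z₀ * conj α) ^ (m₀ - m f) = 0 := by
                  rw [hz₀α, sub_self, zero_pow (by omega), mul_zero]
                rw [← h0]
                exact hcont.tendsto.mono_left nhdsWithin_le_nhds
            · -- different α : continuous at z₀
              have hd : 1 - z₀ * conj (a f) ≠ 0 := by
                intro h
                apply hfα
                have h1 : z₀ * conj (a f) = 1 := by linear_combination -h
                have h2 : conj (a f) = conj α := by
                  exact mul_left_cancel₀ hz₀0 (h1.trans hz₀α.symm)
                have := congrArg conj h2
                simpa using this
              refine tendsto_mul_vanish (continuousAt_M m₀ z₀) (hMz₀ m₀) ?_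
              exact continuousAt_const.mul (continuousAt_gen (m f) hd)
        have hγlim : Tendsto (fun z => (1 - z * conj α) ^ (m₀ + 1) * γ) (𝓝[≠] z₀) (𝓝 0) :=
          tendsto_mul_vanish (continuousAt_M m₀ z₀) (hMz₀ m₀) continuousAt_const
        have hsum : Tendsto (fun z => (1 - z * conj α) ^ (m₀ + 1) * γ
            + ∑ f ∈ s, (1 - z * conj α) ^ (m₀ + 1) * (c f * gen (a f) (m f) z)) (𝓝[≠] z₀)
            (𝓝 (0 + ∑ f ∈ s, if f = fs then c fs * z₀ ^ (m₀ + 1) else 0)) :=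
          hγlim.add (tendsto_finset_sum _ hterm)
        have hlim2 : Tendsto (fun z => (1 - z * conj α) ^ (m₀ + 1)
            * (γ + ∑ f ∈ s, c f * gen (a f) (m f) z)) (𝓝[≠] z₀)
            (𝓝 (c fs * z₀ ^ (m₀ + 1))) := by
          have heq : ∀ z : ℂ, (1 - z * conj α) ^ (m₀ + 1)
              * (γ + ∑ f ∈ s, c f * gen (a f) (m f) z)
              = (1 - z * conj α) ^ (m₀ + 1) * γ
              + ∑ f ∈ s, (1 - z * conj α) ^ (m₀ + 1) * (c f * gen (a f) (m f) z) := by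
            intro z
            rw [mul_add, Finset.mul_sum]
          rw [Finset.sum_ite_eq' s fs, if_pos hfs, zero_add] at hsum
          exact Tendsto.congr (fun z => (heq z).symm) hsum
        have hcfs : c fs = 0 := by
          have hL : c fs * z₀ ^ (m₀ + 1) = 0 := by
            refine limit_zero_helper hE (fun z hz => ?_) hlim2
            rw [hid z hz, mul_zero]
          rcases mul_eq_zero.mp hL with h | h
          · exact h
          · exact absurd h (pow_ne_zero _ hz₀0)
        -- recurse on s.erase fs
        have hid' : ∀ z ∉ E, γ + (∑ f ∈ s.erase fs, c f * gen (a f) (m f) z)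
            + (∑ f ∈ (∅ : Finset (ℂ → ℂ)), c' f * ((z - b f) ^ (n f + 1))⁻¹) = 0 := by
          intro z hz
          have h1 := hid z hz
          rw [← Finset.add_sum_erase s _ hfs, hcfs, zero_mul, zero_add] at h1
          simpa using h1
        have hres := ih (s.erase fs) ∅ a b m n c c' γ E
          (by rw [Finset.card_erase_of_mem hfs]; simp at hcard ⊢; omega) hE
          (fun f hf => ha f (Finset.mem_of_mem_erase hf)) (by simp)
          (hinja.mono (Finset.coe_subset.mpr (Finset.erase_subset _ _))) (by simp) hid'
        refine ⟨hres.1, fun f hf => ?_, by simp⟩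
        rcases eq_or_ne f fs with rfl | hne
        · exact hcfs
        · exact hres.2.1 f (Finset.mem_erase.mpr ⟨hne, hf⟩)
    · -- t nonempty : extract a pole inside the disc
      set β := b f₀ with hβ
      set t' := t.filter (fun f => b f = β) with ht'
      have hf₀' : f₀ ∈ t' := Finset.mem_filter.mpr ⟨hf₀, rfl⟩
      have hne' : (t'.image n).Nonempty := ⟨n f₀, Finset.mem_image_of_mem n hf₀'⟩
      set n₀ := (t'.image n).max' hne' with hn₀
      obtain ⟨ft, hft', hftn⟩ := Finset.mem_image.mp ((t'.image n).max'_mem hne')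
      have hft : ft ∈ t := (Finset.mem_filter.mp hft').1
      have hftb : b ft = β := (Finset.mem_filter.mp hft').2
      have hβ1 : ‖β‖ < 1 := hb f₀ hf₀
      have htermS : ∀ f ∈ s, Tendsto
          (fun z => (z - β) ^ (n₀ + 1) * (c f * gen (a f) (m f) z)) (𝓝[≠] β) (𝓝 0) := by
        intro f hf
        have hd : 1 - β * conj (a f) ≠ 0 := by
          refine one_sub_ne_zero_of_abs_lt ?_
          rw [norm_mul, Complex.norm_conj]
          calc ‖β‖ * ‖a f‖ ≤ ‖β‖ * 1 := by
                refine mul_le_mul_of_nonneg_left (le_of_lt (ha f hf)) (norm_nonneg _)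
            _ < 1 := by rw [mul_one]; exact hβ1
        refine tendsto_mul_vanish ((continuousAt_id.sub continuousAt_const).pow _) ?_
          (continuousAt_const.mul (continuousAt_gen (m f) hd))
        simp
      have htermT : ∀ f ∈ t, Tendsto
          (fun z => (z - β) ^ (n₀ + 1) * (c' f * ((z - b f) ^ (n f + 1))⁻¹)) (𝓝[≠] β)
          (𝓝 (if f = ft then c' ft else 0)) := by
        intro f hf
        rcases eq_or_ne f ft with rfl | hfft
        · simp only [if_pos rfl]
          refine Tendsto.congr' ?_ tendsto_const_nhds
          filter_upwards [self_mem_nhdsWithin] with z hz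
          have hzβ : z - β ≠ 0 := sub_ne_zero.mpr hz
          rw [hftb, hftn]
          simp only [if_true, ← hn₀]
          field_simp
        · simp only [if_neg hfft]
          rcases eq_or_ne (b f) β with hfβ | hfβ
          · have hnle : n f ≤ n₀ := Finset.le_max' _ _
              (Finset.mem_image_of_mem n (Finset.mem_filter.mpr ⟨hf, hfβ⟩))
            have hnne : n f ≠ n₀ := by
              intro h
              exact hfft (hinjb hf hft (by simp [hfβ, hftb, h, hftn, hn₀]))
            have hnlt : n f < n₀ := lt_of_le_of_ne hnle hnne
            refine Tendsto.congr' (f₁ := fun z => c' f * (z - β) ^ (n₀ - n f)) ?_ ?_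
            · filter_upwards [self_mem_nhdsWithin] with z hz
              have hzβ : z - β ≠ 0 := sub_ne_zero.mpr hz
              rw [hfβ, show n₀ + 1 = (n f + 1) + (n₀ - n f) by omega, pow_add]
              field_simp
            · have h0 : c' f * (β - β) ^ (n₀ - n f) = 0 := by
                rw [sub_self, zero_pow (by omega), mul_zero]
              rw [← h0]
              exact (continuousAt_const.mul ((continuousAt_id.sub
                continuousAt_const).pow _)).tendsto.mono_left nhdsWithin_le_nhds
          · have hd : β - b f ≠ 0 := sub_ne_zero.mpr (Ne.symm hfβ)
            refine tendsto_mul_vanish ((continuousAt_id.sub continuousAt_const).pow _) ?_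
              (continuousAt_const.mul (continuousAt_invpow (n f) hd))
            simp
      have hγlim : Tendsto (fun z => (z - β) ^ (n₀ + 1) * γ) (𝓝[≠] β) (𝓝 0) := by
        refine tendsto_mul_vanish ((continuousAt_id.sub continuousAt_const).pow _) ?_
          continuousAt_const
        simp
      have hsum : Tendsto (fun z => (z - β) ^ (n₀ + 1) * γ
          + ∑ f ∈ s, (z - β) ^ (n₀ + 1) * (c f * gen (a f) (m f) z)
          + ∑ f ∈ t, (z - β) ^ (n₀ + 1) * (c' f * ((z - b f) ^ (n f + 1))⁻¹)) (𝓝[≠] β)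
          (𝓝 (0 + ∑ f ∈ s, (0 : ℂ) + ∑ f ∈ t, if f = ft then c' ft else 0)) :=
        (hγlim.add (tendsto_finset_sum _ htermS)).add (tendsto_finset_sum _ htermT)
      have hlim2 : Tendsto (fun z => (z - β) ^ (n₀ + 1)
          * (γ + (∑ f ∈ s, c f * gen (a f) (m f) z)
            + ∑ f ∈ t, c' f * ((z - b f) ^ (n f + 1))⁻¹)) (𝓝[≠] β) (𝓝 (c' ft)) := by
        have heq : ∀ z : ℂ, (z - β) ^ (n₀ + 1)
            * (γ + (∑ f ∈ s, c f * gen (a f) (m f) z)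
              + ∑ f ∈ t, c' f * ((z - b f) ^ (n f + 1))⁻¹)
            = (z - β) ^ (n₀ + 1) * γ
            + ∑ f ∈ s, (z - β) ^ (n₀ + 1) * (c f * gen (a f) (m f) z)
            + ∑ f ∈ t, (z - β) ^ (n₀ + 1) * (c' f * ((z - b f) ^ (n f + 1))⁻¹) := by
          intro z
          rw [mul_add, mul_add, Finset.mul_sum, Finset.mul_sum]
        rw [Finset.sum_ite_eq' t ft, if_pos hft, Finset.sum_const_zero, add_zero,
          zero_add] at hsum
        exact Tendsto.congr (fun z => (heq z).symm) hsum
      have hcft : c' ft = 0 := by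
        refine limit_zero_helper hE (fun z hz => ?_) hlim2
        rw [hid z hz, mul_zero]
      have hid' : ∀ z ∉ E, γ + (∑ f ∈ s, c f * gen (a f) (m f) z)
          + (∑ f ∈ t.erase ft, c' f * ((z - b f) ^ (n f + 1))⁻¹) = 0 := by
        intro z hz
        have h1 := hid z hz
        rw [← Finset.add_sum_erase t _ hft, hcft, zero_mul, zero_add] at h1
        exact h1
      have htpos : 0 < t.card := Finset.card_pos.mpr ⟨f₀, hf₀⟩
      have hres := ih s (t.erase ft) a b m n c c' γ E
        (by rw [Finset.card_erase_of_mem hft]; omega) hE ha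
        (fun f hf => hb f (Finset.mem_of_mem_erase hf)) hinja
        (hinjb.mono (Finset.coe_subset.mpr (Finset.erase_subset _ _))) hid'
      refine ⟨hres.1, hres.2.1, fun f hf => ?_⟩
      rcases eq_or_ne f ft with rfl | hne
      · exact hcft
      · exact hres.2.2 f (Finset.mem_erase.mpr ⟨hne, hf⟩)
lemma freq_circle {R : ℂ → ℂ} (h : ∀ z, ‖z‖ = 1 → R z = 0) :
    ∃ᶠ z in 𝓝[≠] (1 : ℂ), R z = 0 := by
  set u : ℕ → ℂ := fun k => Complex.exp ((1 / (k + 1) : ℝ) * Complex.I) with hu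
  have habs : ∀ k, ‖u k‖ = 1 := fun k => Complex.norm_exp_ofReal_mul_I _
  have hx : ∀ k : ℕ, (0 : ℝ) < 1 / (k + 1) := by
    intro k
    positivity
  have hx1 : ∀ k : ℕ, (1 / (k + 1) : ℝ) ≤ 1 := by
    intro k
    rw [div_le_one (by positivity)]
    norm_num
  have hne : ∀ k, u k ≠ 1 := by
    intro k hk
    rw [hu] at hk
    obtain ⟨j, hj⟩ := Complex.exp_eq_one_iff.mp hk
    have h2 : ((1 / (k + 1) : ℝ) : ℂ) = (j : ℂ) * (2 * (Real.pi : ℂ)) := by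
      apply mul_right_cancel₀ Complex.I_ne_zero
      rw [hj]
      ring
    have h3 : (1 / (k + 1) : ℝ) = (j : ℝ) * (2 * Real.pi) := by exact_mod_cast h2
    have hpi := Real.pi_gt_three
    rcases le_or_gt (j : ℝ) 0 with hj0 | hj0
    · nlinarith [hx k]
    · have : (1 : ℝ) ≤ (j : ℝ) := by exact_mod_cast hj0
      nlinarith [hx1 k]
  have htend0 : Tendsto (fun k : ℕ => ((1 / (k + 1) : ℝ) : ℂ) * Complex.I) atTop (𝓝 0) := by
    have h1 : Tendsto (fun k : ℕ => (1 / (k + 1) : ℝ)) atTop (𝓝 0) :=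
      tendsto_one_div_add_atTop_nhds_zero_nat
    have h2 := ((Complex.continuous_ofReal.tendsto 0).comp h1).mul_const Complex.I
    simpa using h2
  have htend : Tendsto u atTop (𝓝 (1 : ℂ)) := by
    have := (Complex.continuous_exp.tendsto 0).comp htend0
    simpa [hu, Complex.exp_zero, Function.comp_def] using this
  have htend' : Tendsto u atTop (𝓝[≠] (1 : ℂ)) :=
    tendsto_nhdsWithin_of_tendsto_nhds_of_eventually_within u htend
      (Eventually.of_forall hne)
  exact htend'.frequently (Frequently.of_forall fun k => h (u k) (habs k))
lemma circle_to_compl (s t : Finset (ℂ → ℂ)) (a b : (ℂ → ℂ) → ℂ) (m n : (ℂ → ℂ) → ℕ)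
    (c c' : (ℂ → ℂ) → ℂ) (γ : ℂ)
    (ha : ∀ f ∈ s, ‖a f‖ < 1) (hb : ∀ f ∈ t, ‖b f‖ < 1)
    (hcirc : ∀ z, ‖z‖ = 1 → γ + (∑ f ∈ s, c f * gen (a f) (m f) z)
      + (∑ f ∈ t, c' f * ((z - b f) ^ (n f + 1))⁻¹) = 0) :
    ∃ E : Set ℂ, E.Finite ∧ ∀ z ∉ E, γ + (∑ f ∈ s, c f * gen (a f) (m f) z)
      + (∑ f ∈ t, c' f * ((z - b f) ^ (n f + 1))⁻¹) = 0 := by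
  classical
  set E : Set ℂ := ↑(s.image (fun f => (conj (a f))⁻¹) ∪ t.image b) with hE
  have hEfin : E.Finite := Finset.finite_toSet _
  refine ⟨E, hEfin, ?_⟩
  set R : ℂ → ℂ := fun z => γ + (∑ f ∈ s, c f * gen (a f) (m f) z)
      + (∑ f ∈ t, c' f * ((z - b f) ^ (n f + 1))⁻¹) with hR
  have hA : AnalyticOnNhd ℂ R Eᶜ := by
    apply AnalyticOnNhd.add
    apply AnalyticOnNhd.add
    · exact analyticOnNhd_const
    · refine Finset.analyticOnNhd_fun_sum s fun f hf => ?_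
      refine analyticOnNhd_const.mul ?_
      refine AnalyticOnNhd.div ((analyticOnNhd_id).pow _)
        ((analyticOnNhd_const.sub (analyticOnNhd_id.mul analyticOnNhd_const)).pow _) ?_
      intro z hz
      refine pow_ne_zero _ fun hzero => ?_
      have hz1 : z * conj (a f) = 1 := by linear_combination -hzero
      have haf : conj (a f) ≠ 0 := by
        intro h0
        rw [h0, mul_zero] at hz1
        exact zero_ne_one hz1
      have : z = (conj (a f))⁻¹ := by
        field_simp [haf] at hz1 ⊢
        rw [hz1]
      exact hz (Finset.mem_coe.mpr (Finset.mem_union_left _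
        (Finset.mem_image.mpr ⟨f, hf, this.symm⟩)))
    · refine Finset.analyticOnNhd_fun_sum t fun f hf => ?_
      refine analyticOnNhd_const.mul ?_
      refine AnalyticOnNhd.inv ((analyticOnNhd_id.sub analyticOnNhd_const).pow _) ?_
      intro z hz
      refine pow_ne_zero _ fun hzero => ?_
      have : z = b f := by linear_combination hzero
      exact hz (Finset.mem_coe.mpr (Finset.mem_union_right _
        (Finset.mem_image.mpr ⟨f, hf, this.symm⟩)))
  have hpre : IsPreconnected Eᶜ :=
    (Set.Countable.isConnected_compl_of_one_lt_rank
      (by rw [Complex.rank_real_complex]; norm_num) hEfin.countable).isPreconnected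
  have h1mem : (1 : ℂ) ∈ Eᶜ := by
    intro hmem
    rw [hE] at hmem
    rcases Finset.mem_union.mp (Finset.mem_coe.mp hmem) with h | h
    · obtain ⟨f, hf, hfe⟩ := Finset.mem_image.mp h
      have habs := congrArg norm hfe
      rw [norm_inv, Complex.norm_conj, norm_one] at habs
      have h1 : ‖a f‖ = 1 := inv_eq_one.mp habs
      have hlt := ha f hf
      linarith
    · obtain ⟨f, hf, hfe⟩ := Finset.mem_image.mp h
      have := hb f hf
      rw [hfe] at this
      simp at this
  have hfreq : ∃ᶠ z in 𝓝[≠] (1 : ℂ), R z = 0 := freq_circle fun z hz => hcirc z hz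
  have := hA.eqOn_zero_of_preconnected_of_frequently_eq_zero hpre h1mem hfreq
  intro z hz
  exact this hz
lemma span_zero (γ : ℂ) (d e : ℂ → ℂ) (hd : d ∈ Submodule.span ℂ kGens)
    (he : e ∈ Submodule.span ℂ kGens)
    (h : ∀ z, ‖z‖ = 1 → γ + d z + conj (e z) = 0) :
    γ = 0 ∧ d = 0 ∧ e = 0 := by
  classical
  obtain ⟨cd, hcdsub, hcdsum⟩ := Submodule.mem_span_set.mp hd
  obtain ⟨ce, hcesub, hcesum⟩ := Submodule.mem_span_set.mp he
  have hgen1 : ∀ f : ℂ → ℂ, ∃ aa : ℂ, ∃ mm : ℕ, f ∈ cd.support →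
      (‖aa‖ < 1 ∧ f = gen aa mm) := by
    intro f
    by_cases hf : f ∈ cd.support
    · obtain ⟨aa, mm, h1, h2⟩ := hcdsub hf
      exact ⟨aa, mm, fun _ => ⟨h1, h2⟩⟩
    · exact ⟨0, 0, fun h => absurd h hf⟩
  have hgen2 : ∀ f : ℂ → ℂ, ∃ aa : ℂ, ∃ mm : ℕ, f ∈ ce.support →
      (‖aa‖ < 1 ∧ f = gen aa mm) := by
    intro f
    by_cases hf : f ∈ ce.support
    · obtain ⟨aa, mm, h1, h2⟩ := hcesub hf
      exact ⟨aa, mm, fun _ => ⟨h1, h2⟩⟩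
    · exact ⟨0, 0, fun h => absurd h hf⟩
  choose a1 m1 hprop1 using hgen1
  choose a2 m2 hprop2 using hgen2
  have hdz : ∀ z, d z = ∑ f ∈ cd.support, cd f * f z := by
    intro z
    rw [← hcdsum, Finsupp.sum, Finset.sum_apply]
    simp [Pi.smul_apply, smul_eq_mul]
  have hez : ∀ z, e z = ∑ f ∈ ce.support, ce f * f z := by
    intro z
    rw [← hcesum, Finsupp.sum, Finset.sum_apply]
    simp [Pi.smul_apply, smul_eq_mul]
  have hcirc : ∀ z, ‖z‖ = 1 →
      γ + (∑ f ∈ cd.support, cd f * gen (a1 f) (m1 f) z)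
      + (∑ f ∈ ce.support, conj (ce f) * ((z - a2 f) ^ (m2 f + 1))⁻¹) = 0 := by
    intro z hz
    have h1 : ∑ f ∈ cd.support, cd f * gen (a1 f) (m1 f) z = d z := by
      rw [hdz]
      refine Finset.sum_congr rfl fun f hf => ?_
      rw [← (hprop1 f hf).2]
    have h2 : ∑ f ∈ ce.support, conj (ce f) * ((z - a2 f) ^ (m2 f + 1))⁻¹ = conj (e z) := by
      rw [hez, map_sum]
      refine Finset.sum_congr rfl fun f hf => ?_
      rw [map_mul, ← conj_gen_circle (hprop2 f hf).1 hz, ← (hprop2 f hf).2]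
    rw [h1, h2]
    exact h z hz
  obtain ⟨E, hEfin, hid⟩ := circle_to_compl cd.support ce.support a1 a2 m1 m2
    (fun f => cd f) (fun f => conj (ce f)) γ
    (fun f hf => (hprop1 f hf).1) (fun f hf => (hprop2 f hf).1) hcirc
  have hinj1 : Set.InjOn (fun f => (a1 f, m1 f)) cd.support := by
    intro f hf g hg hfg
    have h1 := (hprop1 f hf).2
    have h2 := (hprop1 g hg).2
    simp only [Prod.mk.injEq] at hfg
    rw [h1, h2, hfg.1, hfg.2]
  have hinj2 : Set.InjOn (fun f => (a2 f, m2 f)) ce.support := by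
    intro f hf g hg hfg
    have h1 := (hprop2 f hf).2
    have h2 := (hprop2 g hg).2
    simp only [Prod.mk.injEq] at hfg
    rw [h1, h2, hfg.1, hfg.2]
  obtain ⟨hγ, hc1, hc2⟩ := indep (cd.support.card + ce.support.card) cd.support ce.support
    a1 a2 m1 m2 (fun f => cd f) (fun f => conj (ce f)) γ E le_rfl hEfin
    (fun f hf => (hprop1 f hf).1) (fun f hf => (hprop2 f hf).1) hinj1 hinj2 hid
  refine ⟨hγ, ?_, ?_⟩
  · rw [← hcdsum, Finsupp.sum]
    exact Finset.sum_eq_zero fun f hf => by rw [hc1 f hf, zero_smul]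
  · rw [← hcesum, Finsupp.sum]
    refine Finset.sum_eq_zero fun f hf => ?_
    have : ce f = 0 := by
      have := hc2 f hf
      simpa using this
    rw [this, zero_smul]

/-- The partial-fractions-like decomposition `ℛ_s = ℂ + 𝐤 + conj 𝐤` on the unit disc:
the restriction to the unit circle of a rational function `P(z, z̄)/Q(z, z̄)` with
nonvanishing denominator on the circle has a unique decomposition `c + k₁ + conj k₂`
with `c` a constant and `k₁, k₂` in the span `𝐤` of the normalized antiderivatives of
the Bergman span of the disc. -/
theorem partial_fractions_decomposition_unit_disc
    (P Q : MvPolynomial (Fin 2) ℂ)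
    (hQ : ∀ z : ℂ, ‖z‖ = 1 → MvPolynomial.eval ![z, conj z] Q ≠ 0) :
    ∃! ckk : ℂ × (ℂ → ℂ) × (ℂ → ℂ),
      ckk.2.1 ∈ Submodule.span ℂ kGens ∧ ckk.2.2 ∈ Submodule.span ℂ kGens ∧
      ∀ z : ℂ, ‖z‖ = 1 →
        MvPolynomial.eval ![z, conj z] P / MvPolynomial.eval ![z, conj z] Q
          = ckk.1 + ckk.2.1 z + conj (ckk.2.2 z) := by

  obtain ⟨c, k₁, k₂, h1, h2, h3⟩ := good_PQ P Q hQ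
  refine ⟨⟨c, k₁, k₂⟩, ⟨h1, h2, fun z hz => h3 z hz⟩, ?_⟩
  rintro ⟨c', k₁', k₂'⟩ ⟨h1', h2', h3'⟩
  dsimp only at h1' h2' h3'
  have key : ∀ z, ‖z‖ = 1 →
      (c' - c) + (k₁' - k₁) z + conj ((k₂' - k₂) z) = 0 := by
    intro z hz
    have e1 := h3 z hz
    beta_reduce at e1
    have e2 := h3' z hz
    simp only [Pi.sub_apply, map_sub]
    linear_combination e1 - e2
  obtain ⟨hγ, hd, he⟩ := span_zero (c' - c) (k₁' - k₁) (k₂' - k₂)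
    (Submodule.sub_mem _ h1' h1) (Submodule.sub_mem _ h2' h2) key
  have hc : c' = c := by linear_combination hγ
  have hk1 : k₁' = k₁ := by
    have := sub_eq_zero.mp hd
    exact this
  have hk2 : k₂' = k₂ := sub_eq_zero.mp he
  simp [Prod.ext_iff, hc, hk1, hk2]
end
end
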